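/- Let (F, C, f, c) be a facility-location instance with C nonempty, and let x' : F × 𝒫(C) → ℝ be a feasible solution of the Hochbaum set-cover LP: x'_{j,S} ≥ 0 for all j ∈ F and S ⊆ C, and Σ_{j∈F} Σ_{S⊆C : i∈S} x'_{j,S} ≥ 1 for every i ∈ C. Define x_{ij} = Σ_{S⊆C : i∈S} x'_{j,S} and y_j = max_{i∈C} x_{ij}. Then (x, y) is a feasible solution of the facility-location LP (x_{ij} ≥ 0, Σ_{j∈F} x_{ij} ≥ 1 for every i, y_j ≥ x_{ij} for all i,j), and its cost satisfies Σ_{j∈F} f_j y_j + Σ_{i∈C, j∈F} c_{ij} x_{ij} ≤ Σ_{j∈F} Σ_{S⊆C} x'_{j,S} · (f_j + Σ_{i∈S} c_{ij}). -/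

import Mathlib

open Finset

/-- From a feasible solution `x'` of the Hochbaum set-cover LP, the pair
`x_{ij} = ∑_{S ∋ i} x'_{j,S}`, `y_j = max_i x_{ij}` is a feasible facility-location
LP solution of no greater cost. -/
theorem hochbaum_to_facility_location
    (F C : Type*) [Fintype F] [Fintype C] [DecidableEq C] [Nonempty C]
    (f : F → ℝ) (c : C → F → ℝ)
    (hf : ∀ j, 0 ≤ f j) (hc : ∀ i j, 0 ≤ c i j)
    (x' : F → Finset C → ℝ)
    (hx' : ∀ j S, 0 ≤ x' j S)
    (hcov : ∀ i : C, 1 ≤ ∑ j, ∑ S ∈ Finset.univ.filter (fun S => i ∈ S), x' j S) :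
    (∀ i : C, ∀ j : F,
        0 ≤ ∑ S ∈ Finset.univ.filter (fun S => i ∈ S), x' j S) ∧
    (∀ i : C, 1 ≤ ∑ j, ∑ S ∈ Finset.univ.filter (fun S => i ∈ S), x' j S) ∧
    (∀ i : C, ∀ j : F,
        (∑ S ∈ Finset.univ.filter (fun S => i ∈ S), x' j S)
          ≤ Finset.univ.sup' Finset.univ_nonempty
              (fun i' : C => ∑ S ∈ Finset.univ.filter (fun S => i' ∈ S), x' j S)) ∧
    (∑ j, f j * Finset.univ.sup' Finset.univ_nonempty
          (fun i : C => ∑ S ∈ Finset.univ.filter (fun S => i ∈ S), x' j S)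
        + ∑ i, ∑ j, c i j * ∑ S ∈ Finset.univ.filter (fun S => i ∈ S), x' j S
      ≤ ∑ j, ∑ S : Finset C, x' j S * (f j + ∑ i ∈ S, c i j)) := by
  refine ⟨fun i j => Finset.sum_nonneg fun S _ => hx' j S, hcov,
    fun i j => Finset.le_sup' (fun i' : C => ∑ S ∈ Finset.univ.filter (fun S => i' ∈ S), x' j S)
      (Finset.mem_univ i), ?_⟩
  have hsup : ∀ j : F,
      Finset.univ.sup' Finset.univ_nonempty
        (fun i : C => ∑ S ∈ Finset.univ.filter (fun S => i ∈ S), x' j S)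
      ≤ ∑ S : Finset C, x' j S := by
    intro j
    apply Finset.sup'_le
    intro i _
    exact Finset.sum_le_sum_of_subset_of_nonneg (Finset.filter_subset _ _)
      (fun S _ _ => hx' j S)
  have hswap : ∑ i, ∑ j, c i j * ∑ S ∈ Finset.univ.filter (fun S => i ∈ S), x' j S
      = ∑ j, ∑ S : Finset C, x' j S * ∑ i ∈ S, c i j := by
    rw [Finset.sum_comm]
    refine Finset.sum_congr rfl fun j _ => ?_
    calc ∑ i, c i j * ∑ S ∈ Finset.univ.filter (fun S => i ∈ S), x' j S
        = ∑ i, ∑ S : Finset C, (if i ∈ S then c i j * x' j S else 0) := by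
          refine Finset.sum_congr rfl fun i _ => ?_
          rw [Finset.mul_sum, Finset.sum_filter]
      _ = ∑ S : Finset C, ∑ i, (if i ∈ S then c i j * x' j S else 0) :=
          Finset.sum_comm
      _ = ∑ S : Finset C, x' j S * ∑ i ∈ S, c i j := by
          refine Finset.sum_congr rfl fun S _ => ?_
          rw [Finset.mul_sum, ← Finset.sum_filter]
          simp [Finset.filter_mem_eq_inter, mul_comm]
  rw [hswap]
  have : ∑ j, ∑ S : Finset C, x' j S * (f j + ∑ i ∈ S, c i j)
      = ∑ j, (f j * ∑ S : Finset C, x' j S) + ∑ j, ∑ S : Finset C, x' j S * ∑ i ∈ S, c i j := by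
    rw [← Finset.sum_add_distrib]
    refine Finset.sum_congr rfl fun j _ => ?_
    rw [Finset.mul_sum, ← Finset.sum_add_distrib]
    refine Finset.sum_congr rfl fun S _ => ?_
    ring
  rw [this]
  apply add_le_add_left
  apply Finset.sum_le_sum
  intro j _
  exact mul_le_mul_of_nonneg_left (hsup j) (hf j)
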